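/- If the reduced graph of G is a Hamiltonian path P_R inducing a linear order on SCCs, then for any two vertices u, v in distinct SCCs with sccOf(u) before sccOf(v) in that order, every Hamiltonian path of G from s to e visits u before v. -/

import Mathlib

variable {V : Type*}

/-- Reachability in a directed graph given by arc relation `A`. -/
def Reach (A : V → V → Prop) : V → V → Prop := Relation.ReflTransGen A

/-- Two vertices are in the same strongly connected component. -/
def SameSCC (A : V → V → Prop) (u v : V) : Prop := Reach A u v ∧ Reach A v u

/-- The strongly connected component of a vertex. -/
def sccOf (A : V → V → Prop) (v : V) : Set V := {u | SameSCC A v u}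

/-- A set is a strongly connected component. -/
def IsSCC (A : V → V → Prop) (X : Set V) : Prop := ∃ v, X = sccOf A v

/-- Arcs of the reduced graph (condensation): between distinct SCCs joined by an arc of `A`. -/
def CondArc (A : V → V → Prop) (X Y : Set V) : Prop :=
  IsSCC A X ∧ IsSCC A Y ∧ X ≠ Y ∧ ∃ u ∈ X, ∃ v ∈ Y, A u v

/-- A directed graph is acyclic: no arc lies on a directed cycle. -/
def Acyclic (A : V → V → Prop) : Prop := ∀ u v, A u v → ¬ Reach A v u

/-- A Hamiltonian path of the digraph `A`, as a duplicate-free list visiting every vertex. -/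
def IsHamList (A : V → V → Prop) (p : List V) : Prop :=
  p.Chain' A ∧ p.Nodup ∧ ∀ v, v ∈ p

/-- A Hamiltonian path from `s` to `e`. -/
def IsHamPath (A : V → V → Prop) (s e : V) (p : List V) : Prop :=
  IsHamList A p ∧ p.head? = some s ∧ p.getLast? = some e

/-- A Hamiltonian path of the reduced graph: a duplicate-free list of SCCs, chained by
condensation arcs, containing every SCC. -/
def RHamPath (A : V → V → Prop) (P : List (Set V)) : Prop :=
  (∀ X ∈ P, IsSCC A X) ∧ P.Chain' (CondArc A) ∧ P.Nodup ∧ ∀ X, IsSCC A X → X ∈ P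

/-- If the reduced graph of `G` is a Hamiltonian path `P` and `sccOf u` comes before
`sccOf v` on `P`, then every Hamiltonian path of `G` from `s` to `e` visits `u` before `v`. -/
lemma reach_of_isSCC {A : V → V → Prop} {X : Set V} (hX : IsSCC A X)
    {x y : V} (hx : x ∈ X) (hy : y ∈ X) : Reach A x y := by
  obtain ⟨w, rfl⟩ := hX
  exact hx.2.trans hy.1

lemma reach_chain' {A : V → V → Prop} {p : List V} (hc : p.Chain' A)
    {i j : ℕ} (hij : i ≤ j) (hj : j < p.length) :
    Reach A (p.get ⟨i, lt_of_le_of_lt hij hj⟩) (p.get ⟨j, hj⟩) := by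
  induction j with
  | zero =>
    interval_cases i
    exact Relation.ReflTransGen.refl
  | succ k ih =>
    rcases Nat.lt_or_ge i (k+1) with h | h
    · have hk : k < p.length := Nat.lt_of_succ_lt hj
      have := ih (Nat.lt_succ_iff.mp h) hk
      refine this.tail ?_
      exact List.isChain_iff_getElem.mp hc k (by omega)
    · have : i = k + 1 := le_antisymm hij h
      subst this
      exact Relation.ReflTransGen.refl

lemma reach_condChain {A : V → V → Prop} {P : List (Set V)}
    (hSCC : ∀ X ∈ P, IsSCC A X) (hc : P.Chain' (CondArc A))
    {i j : ℕ} (hij : i < j) (hj : j < P.length)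
    {x y : V} (hx : x ∈ P.get ⟨i, lt_trans hij hj⟩) (hy : y ∈ P.get ⟨j, hj⟩) :
    Reach A x y := by
  induction j generalizing y with
  | zero => omega
  | succ k ih =>
    have hk : k < P.length := Nat.lt_of_succ_lt hj
    have harc : CondArc A (P.get ⟨k, hk⟩) (P.get ⟨k+1, hj⟩) :=
      List.isChain_iff_getElem.mp hc k (by omega)
    obtain ⟨hX, hY, -, a, ha, b, hb, hab⟩ := harc
    have h1 : Reach A b y := reach_of_isSCC hY hb hy
    have h2 : Reach A x a := by
      rcases Nat.lt_or_ge i k with h | h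
      · exact ih h hk hx ha
      · have : i = k := by omega
        subst this
        exact reach_of_isSCC hX hx ha
    exact (h2.tail hab).trans h1

lemma sccOf_eq_of_sameSCC {A : V → V → Prop} {u v : V} (h : SameSCC A u v) :
    sccOf A u = sccOf A v := by
  ext w
  constructor
  · rintro ⟨h1, h2⟩; exact ⟨h.2.trans h1, h2.trans h.1⟩
  · rintro ⟨h1, h2⟩; exact ⟨h.1.trans h1, h2.trans h.2⟩

theorem scc_order_forces_visit_order [DecidableEq V]
    (A : V → V → Prop) (s e : V)
    (P : List (Set V)) (hP : RHamPath A P)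
    (u v : V) (hne : sccOf A u ≠ sccOf A v)
    (i j : ℕ) (hij : i < j)
    (hi : P[i]? = some (sccOf A u)) (hj : P[j]? = some (sccOf A v)) :
    ∀ H : List V, IsHamPath A s e H → H.idxOf u < H.idxOf v := by
  obtain ⟨hjl, hje⟩ := List.getElem?_eq_some_iff.mp hj
  obtain ⟨hil, hie⟩ := List.getElem?_eq_some_iff.mp hi
  have hu : u ∈ P.get ⟨i, hil⟩ := by
    simp only [List.get_eq_getElem, hie]
    exact ⟨Relation.ReflTransGen.refl, Relation.ReflTransGen.refl⟩
  have hv : v ∈ P.get ⟨j, hjl⟩ := by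
    simp only [List.get_eq_getElem, hje]
    exact ⟨Relation.ReflTransGen.refl, Relation.ReflTransGen.refl⟩
  have ruv : Reach A u v := reach_condChain hP.1 hP.2.1 hij hjl hu hv
  intro H hH
  by_contra hcon
  push_neg at hcon
  have hmu : u ∈ H := hH.1.2.2 u
  have hmv : v ∈ H := hH.1.2.2 v
  have hul : H.idxOf u < H.length := List.idxOf_lt_length_iff.mpr hmu
  have rvu : Reach A v u := by
    have := reach_chain' hH.1.1 hcon hul
    rwa [List.idxOf_get, List.idxOf_get] at this
  exact hne (sccOf_eq_of_sameSCC ⟨ruv, rvu⟩)
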